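/- Let (X,Y) be a BLM pair with parameter θ > 0 and joint survival function H̄, and assume the marginal survival functions F̄, Ḡ are strictly positive on [0,∞). Then H̄ is RR₂ on (0,∞)×(0,∞) if and only if both marginals are DFR (i.e., x ↦ −log F̄(x) and x ↦ −log Ḡ(x) are concave on [0,∞)) and F̄(x)·Ḡ(x) ≥ e^{−θx} for all x ≥ 0. -/

import Mathlib

open MeasureTheory Real Set Filter

/-- Marginal survival function `x ↦ P(X > x)`. -/
def survival {Ω : Type*} [MeasurableSpace Ω] (μ : Measure Ω) (X : Ω → ℝ) (x : ℝ) : ℝ :=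
  (μ {ω | x < X ω}).toReal

/-- Joint survival function `(x,y) ↦ P(X > x, Y > y)`. -/
def jointSurvival {Ω : Type*} [MeasurableSpace Ω] (μ : Measure Ω) (X Y : Ω → ℝ) (x y : ℝ) : ℝ :=
  (μ {ω | x < X ω ∧ y < Y ω}).toReal

/-- `(X,Y)` is a BLM pair with parameter `θ > 0`. -/
def IsBLM {Ω : Type*} [MeasurableSpace Ω] (μ : Measure Ω) (X Y : Ω → ℝ) (θ : ℝ) : Prop :=
  0 < θ ∧ μ {ω | 0 < X ω} = 1 ∧ μ {ω | 0 < Y ω} = 1 ∧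
  (∀ x y : ℝ, 0 ≤ y → y ≤ x →
    jointSurvival μ X Y x y = Real.exp (-θ * y) * survival μ X (x - y)) ∧
  (∀ x y : ℝ, 0 ≤ x → x ≤ y →
    jointSurvival μ X Y x y = Real.exp (-θ * x) * survival μ Y (y - x))

/-- `K` is reverse regular of order two on `S × T`. -/
def RR2 (K : ℝ → ℝ → ℝ) (S T : Set ℝ) : Prop :=
  ∀ x₁ ∈ S, ∀ x₂ ∈ S, ∀ y₁ ∈ T, ∀ y₂ ∈ T, x₁ < x₂ → y₁ < y₂ →
    K x₁ y₁ * K x₂ y₂ ≤ K x₁ y₂ * K x₂ y₁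

private lemma survival_mono {Ω : Type*} [MeasurableSpace Ω] (μ : Measure Ω)
    [IsProbabilityMeasure μ] (X : Ω → ℝ) {u v : ℝ} (huv : u ≤ v) :
    survival μ X v ≤ survival μ X u := by
  apply ENNReal.toReal_mono (measure_ne_top μ _)
  exact measure_mono (fun ω h => lt_of_le_of_lt huv h)

private lemma survival_rc {Ω : Type*} [MeasurableSpace Ω] (μ : Measure Ω)
    [IsProbabilityMeasure μ] (X : Ω → ℝ) (p : ℝ) :
    ∀ ε > (0:ℝ), ∃ δ > (0:ℝ), survival μ X p ≤ survival μ X (p + δ) + ε := by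
  intro ε hε
  have hmono : Monotone (fun n : ℕ => {ω | p + 1/((n:ℝ)+1) < X ω}) := by
    intro m n hmn ω hω
    simp only [Set.mem_setOf_eq] at *
    have h1 : 1/((n:ℝ)+1) ≤ 1/((m:ℝ)+1) := by
      apply one_div_le_one_div_of_le (by positivity)
      have : (m:ℝ) ≤ n := by exact_mod_cast hmn
      linarith
    linarith
  have hU : (⋃ n : ℕ, {ω | p + 1/((n:ℝ)+1) < X ω}) = {ω | p < X ω} := by
    ext ω
    simp only [Set.mem_iUnion, Set.mem_setOf_eq]
    constructor
    · rintro ⟨n, hn⟩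
      have : (0:ℝ) < 1/((n:ℝ)+1) := by positivity
      linarith
    · intro h
      obtain ⟨n, hn⟩ := exists_nat_one_div_lt (sub_pos.mpr h)
      exact ⟨n, by linarith⟩
  have hT := tendsto_measure_iUnion_atTop (μ := μ) hmono
  rw [hU] at hT
  have hT2 : Tendsto (fun n : ℕ => survival μ X (p + 1/((n:ℝ)+1))) atTop
      (nhds (survival μ X p)) :=
    (ENNReal.tendsto_toReal (measure_ne_top μ _)).comp hT
  obtain ⟨n, hn⟩ := (hT2.eventually (eventually_gt_nhds
    (show survival μ X p - ε < survival μ X p by linarith))).exists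
  exact ⟨1/((n:ℝ)+1), by positivity, by linarith⟩

private lemma dyadic_convex (f : ℝ → ℝ)
    (hmid : ∀ x, 0 ≤ x → ∀ y, 0 ≤ y → f ((x+y)/2) ≤ (f x + f y)/2) :
    ∀ n k : ℕ, k ≤ 2^n → ∀ x y : ℝ, 0 ≤ x → 0 ≤ y →
      f (((k:ℝ) / 2^n) * x + (1 - (k:ℝ)/2^n) * y)
        ≤ ((k:ℝ)/2^n) * f x + (1 - (k:ℝ)/2^n) * f y := by
  intro n
  induction n with
  | zero =>
    intro k hk x y hx hy
    interval_cases k <;> norm_num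
  | succ n ih =>
    intro k hk x y hx hy
    have hk' : k ≤ 2 * 2^n := by rw [pow_succ] at hk; omega
    set j := k / 2 with hjdef
    set i := k - j with hidef
    have hij : i + j = k := by omega
    have hi2 : i ≤ 2^n := by omega
    have hj2 : j ≤ 2^n := by omega
    have hc : (0:ℝ) < 2^n := by positivity
    have hcne : ((2:ℝ)^n) ≠ 0 := ne_of_gt hc
    have hcne2 : ((2:ℝ)^(n+1)) ≠ 0 := by positivity
    have hiR : (i:ℝ) ≤ 2^n := by exact_mod_cast hi2
    have hjR : (j:ℝ) ≤ 2^n := by exact_mod_cast hj2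
    have hi1 : (i:ℝ)/2^n ≤ 1 := (div_le_one hc).mpr hiR
    have hj1 : (j:ℝ)/2^n ≤ 1 := (div_le_one hc).mpr hjR
    have hi0 : (0:ℝ) ≤ (i:ℝ)/2^n := by positivity
    have hj0 : (0:ℝ) ≤ (j:ℝ)/2^n := by positivity
    have hp0 : 0 ≤ ((i:ℝ)/2^n) * x + (1 - (i:ℝ)/2^n) * y :=
      add_nonneg (mul_nonneg hi0 hx) (mul_nonneg (by linarith) hy)
    have hq0 : 0 ≤ ((j:ℝ)/2^n) * x + (1 - (j:ℝ)/2^n) * y :=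
      add_nonneg (mul_nonneg hj0 hx) (mul_nonneg (by linarith) hy)
    have hk2 : (k:ℝ) = (i:ℝ) + (j:ℝ) := by exact_mod_cast hij.symm
    have hmidpt : ((k:ℝ)/2^(n+1)) * x + (1 - (k:ℝ)/2^(n+1)) * y
        = ((((i:ℝ)/2^n) * x + (1 - (i:ℝ)/2^n) * y) + (((j:ℝ)/2^n) * x + (1 - (j:ℝ)/2^n) * y))/2 := by
      rw [hk2]; field_simp; ring
    calc f (((k:ℝ)/2^(n+1)) * x + (1 - (k:ℝ)/2^(n+1)) * y)
        = f (((((i:ℝ)/2^n) * x + (1 - (i:ℝ)/2^n) * y) + (((j:ℝ)/2^n) * x + (1 - (j:ℝ)/2^n) * y))/2) := by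
          rw [hmidpt]
      _ ≤ (f (((i:ℝ)/2^n) * x + (1 - (i:ℝ)/2^n) * y) + f (((j:ℝ)/2^n) * x + (1 - (j:ℝ)/2^n) * y))/2 :=
          hmid _ hp0 _ hq0
      _ ≤ ((((i:ℝ)/2^n) * f x + (1 - (i:ℝ)/2^n) * f y) + (((j:ℝ)/2^n) * f x + (1 - (j:ℝ)/2^n) * f y))/2 := by
          have h1 := ih i hi2 x y hx hy
          have h2 := ih j hj2 x y hx hy
          linarith
      _ = ((k:ℝ)/2^(n+1)) * f x + (1 - (k:ℝ)/2^(n+1)) * f y := by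
          rw [hk2]; field_simp; ring

private lemma convexOn_of_midpoint_rc (f : ℝ → ℝ)
    (hmid : ∀ x, 0 ≤ x → ∀ y, 0 ≤ y → f ((x+y)/2) ≤ (f x + f y)/2)
    (hrc : ∀ p, 0 ≤ p → ∀ ε > (0:ℝ), ∃ δ > (0:ℝ), ∀ q, p ≤ q → q ≤ p + δ → f p ≤ f q + ε) :
    ConvexOn ℝ (Ici 0) f := by
  have key : ∀ x y : ℝ, 0 ≤ x → 0 ≤ y → x ≤ y → ∀ a b : ℝ, 0 ≤ a → 0 ≤ b → a + b = 1 →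
      f (a * x + b * y) ≤ a * f x + b * f y := by
    intro x y hx hy hxy a b ha hb hab
    rcases eq_or_lt_of_le hxy with rfl | hlt
    · have h1 : a * x + b * x = x := by
        have : a * x + b * x = (a + b) * x := by ring
        rw [this, hab, one_mul]
      rw [h1]
      have : a * f x + b * f x = (a + b) * f x := by ring
      rw [this, hab, one_mul]
    · have haeq : a = 1 - b := by linarith
      subst haeq
      refine le_of_forall_pos_le_add ?_
      intro ε hε
      have hp0 : 0 ≤ (1-b) * x + b * y := add_nonneg (mul_nonneg ha hx) (mul_nonneg hb hy)
      obtain ⟨δ, hδ, hδ'⟩ := hrc _ hp0 (ε/2) (by linarith)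
      set M := |f y - f x| + 1 with hM
      have hM0 : (0:ℝ) < M := by positivity
      have hyx : 0 < y - x := by linarith
      obtain ⟨n, hn⟩ := exists_pow_lt_of_lt_one
        (show (0:ℝ) < min (δ/(y-x)) (ε/(2*M)) from lt_min (by positivity) (by positivity))
        (by norm_num : (1:ℝ)/2 < 1)
      have h2n : (0:ℝ) < 2^n := by positivity
      have hsmall : (1:ℝ)/2^n < min (δ/(y-x)) (ε/(2*M)) := by
        rwa [div_pow, one_pow] at hn
      set k := ⌈b * 2^n⌉₊ with hk
      have hb1 : b ≤ 1 := by linarith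
      have hkle : k ≤ 2^n := by
        rw [hk]
        apply Nat.ceil_le.mpr
        push_cast
        nlinarith
      have hks : b * 2^n ≤ (k:ℝ) := Nat.le_ceil _
      have hks2 : (k:ℝ) < b * 2^n + 1 := Nat.ceil_lt_add_one (by positivity)
      set s := (k:ℝ)/2^n with hs
      have hbs : b ≤ s := (le_div_iff₀ h2n).mpr hks
      have hkleR : (k:ℝ) ≤ (2:ℝ)^n := by exact_mod_cast hkle
      have hs1 : s ≤ 1 := (div_le_one h2n).mpr hkleR
      have hsb : s - b < 1/2^n := by
        have e : (b + 1/2^n) * 2^n = b * 2^n + 1 := by field_simp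
        have : s < b + 1/2^n := by
          rw [hs, div_lt_iff₀ h2n, e]; exact hks2
        linarith
      have hsd : s - b < δ/(y-x) := lt_of_lt_of_le hsb (hsmall.le.trans (min_le_left _ _))
      have hse : s - b < ε/(2*M) := lt_of_lt_of_le hsb (hsmall.le.trans (min_le_right _ _))
      have hpp' : (1-b) * x + b * y ≤ (1-s) * x + s * y := by
        have := mul_nonneg (sub_nonneg.mpr hbs) hyx.le
        nlinarith
      have hp'δ : (1-s) * x + s * y ≤ ((1-b) * x + b * y) + δ := by
        have h1 := (lt_div_iff₀ hyx).mp hsd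
        nlinarith
      have hdy := dyadic_convex f hmid n k hkle y x hy hx
      have hfp' : f ((1-s) * x + s * y) ≤ s * f y + (1-s) * f x := by
        have e : ((k:ℝ)/2^n) * y + (1 - (k:ℝ)/2^n) * x = (1-s) * x + s * y := by rw [hs]; ring
        rw [e] at hdy
        linarith [hdy]
      have h1 : f ((1-b) * x + b * y) ≤ f ((1-s) * x + s * y) + ε/2 := hδ' _ hpp' hp'δ
      have habs : f y - f x ≤ M := by
        have := le_abs_self (f y - f x); rw [hM]; linarith
      have hprodf : (s-b) * (f y - f x) ≤ ε/2 := by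
        have e1 : (s-b) * (f y - f x) ≤ (s-b) * M :=
          mul_le_mul_of_nonneg_left habs (by linarith)
        have e2 : (s-b) * M ≤ (ε/(2*M)) * M :=
          mul_le_mul_of_nonneg_right hse.le hM0.le
        have e3 : (ε/(2*M)) * M = ε/2 := by field_simp
        calc (s-b) * (f y - f x) ≤ (s-b) * M := e1
          _ ≤ (ε/(2*M)) * M := e2
          _ = ε/2 := e3
      linarith
  refine ⟨convex_Ici 0, ?_⟩
  intro x hx y hy a b ha hb hab
  simp only [smul_eq_mul, mem_Ici] at *
  rcases le_total x y with h | h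
  · exact key x y hx hy h a b ha hb hab
  · have h2 := key y x hy hx h b a hb ha (by linarith)
    calc f (a*x+b*y) = f (b*y+a*x) := by rw [add_comm]
      _ ≤ b * f y + a * f x := h2
      _ = a * f x + b * f y := by ring

private lemma pair_of_convex (F : ℝ → ℝ) (hpos : ∀ x, 0 ≤ x → 0 < F x)
    (hconv : ConvexOn ℝ (Ici 0) (fun x => Real.log (F x))) :
    ∀ a b c : ℝ, 0 ≤ a → a ≤ b → a ≤ c → F b * F c ≤ F a * F (b + c - a) := by
  intro a b c ha hab hac
  have hb0 : 0 ≤ b := ha.trans hab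
  have hc0 : 0 ≤ c := ha.trans hac
  have hd0 : 0 ≤ b + c - a := by linarith
  rcases eq_or_lt_of_le (show 2*a ≤ b + c by linarith) with heq | hlt
  · have hba : b = a := le_antisymm (by linarith) hab
    have hca : c = a := le_antisymm (by linarith) hac
    rw [hba, hca, show a + a - a = a from by ring]
  · set d := b + c - a with hd
    have hda : a < d := by rw [hd]; linarith
    have hbd : b ≤ d := by rw [hd]; linarith
    have hcd : c ≤ d := by rw [hd]; linarith
    have hd0' : (0:ℝ) ≤ d := by linarith
    have key : ∀ t, a ≤ t → t ≤ d →
        (d - a) * Real.log (F t) ≤ (d - t) * Real.log (F a) + (t - a) * Real.log (F d) := by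
      intro t hat htd
      have hdane : d - a ≠ 0 := by linarith
      have h1 : (0:ℝ) ≤ (d - t)/(d - a) := div_nonneg (by linarith) (by linarith)
      have h2 : (0:ℝ) ≤ (t - a)/(d - a) := div_nonneg (by linarith) (by linarith)
      have h3 : (d-t)/(d-a) + (t-a)/(d-a) = 1 := by field_simp; ring
      have h4 := hconv.2 (mem_Ici.mpr ha) (mem_Ici.mpr hd0') h1 h2 h3
      simp only [smul_eq_mul] at h4
      have h5 : (d-t)/(d-a) * a + (t-a)/(d-a) * d = t := by field_simp; ring
      rw [h5] at h4
      have h6 := mul_le_mul_of_nonneg_left h4 (le_of_lt (show (0:ℝ) < d - a by linarith))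
      calc (d-a) * Real.log (F t)
          ≤ (d-a) * ((d-t)/(d-a) * Real.log (F a) + (t-a)/(d-a) * Real.log (F d)) := h6
        _ = (d-t)*Real.log (F a) + (t-a)*Real.log (F d) := by field_simp
    have kb := key b hab hbd
    have kc := key c hac hcd
    have hsum : (d-a) * (Real.log (F b) + Real.log (F c))
        ≤ (d-a) * (Real.log (F a) + Real.log (F d)) := by
      calc (d-a)*(Real.log (F b) + Real.log (F c))
          = (d-a)*Real.log (F b) + (d-a)*Real.log (F c) := by ring
        _ ≤ ((d-b)*Real.log (F a) + (b-a)*Real.log (F d))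
            + ((d-c)*Real.log (F a) + (c-a)*Real.log (F d)) := add_le_add kb kc
        _ = (d-a)*(Real.log (F a) + Real.log (F d)) := by rw [hd]; ring
    have hlog : Real.log (F b) + Real.log (F c) ≤ Real.log (F a) + Real.log (F d) :=
      le_of_mul_le_mul_left hsum (show (0:ℝ) < d - a by linarith)
    calc F b * F c = Real.exp (Real.log (F b) + Real.log (F c)) := by
          rw [Real.exp_add, Real.exp_log (hpos b hb0), Real.exp_log (hpos c hc0)]
      _ ≤ Real.exp (Real.log (F a) + Real.log (F d)) := Real.exp_le_exp.mpr hlog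
      _ = F a * F d := by
          rw [Real.exp_add, Real.exp_log (hpos a ha), Real.exp_log (hpos d hd0)]

private lemma convex_log_of_pair (F : ℝ → ℝ) (hpos : ∀ x, 0 ≤ x → 0 < F x)
    (hanti : ∀ u v : ℝ, 0 ≤ u → u ≤ v → F v ≤ F u)
    (hrc : ∀ p : ℝ, 0 ≤ p → ∀ ε > (0:ℝ), ∃ δ > (0:ℝ), F p ≤ F (p + δ) + ε)
    (hpair : ∀ a b c : ℝ, 0 ≤ a → a < b → a < c → F b * F c ≤ F a * F (b + c - a)) :
    ConvexOn ℝ (Ici 0) (fun x => Real.log (F x)) := by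
  have mid : ∀ x y : ℝ, 0 ≤ x → x < y →
      Real.log (F ((x+y)/2)) ≤ (Real.log (F x) + Real.log (F y))/2 := by
    intro x y hx hxy
    have hm : x < (x+y)/2 := by linarith
    have hm0 : 0 ≤ (x+y)/2 := by linarith
    have hy0 : 0 ≤ y := by linarith
    have h := hpair x ((x+y)/2) ((x+y)/2) hx hm hm
    rw [show (x+y)/2 + (x+y)/2 - x = y from by ring] at h
    have h2 := Real.log_le_log (mul_pos (hpos _ hm0) (hpos _ hm0)) h
    rw [Real.log_mul (ne_of_gt (hpos _ hm0)) (ne_of_gt (hpos _ hm0)),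
        Real.log_mul (ne_of_gt (hpos _ hx)) (ne_of_gt (hpos _ hy0))] at h2
    linarith
  apply convexOn_of_midpoint_rc
  · intro x hx y hy
    rcases lt_trichotomy x y with h | h | h
    · exact mid x y hx h
    · subst h
      rw [show (x+x)/2 = x from by ring]
      linarith
    · have := mid y x hy h
      rw [show (y+x)/2 = (x+y)/2 from by ring] at this
      linarith
  · intro p hp ε hε
    have hFp := hpos p hp
    have hexp1 : Real.exp (-ε) < 1 := by
      rw [show (1:ℝ) = Real.exp 0 from (Real.exp_zero).symm]
      exact Real.exp_lt_exp.mpr (by linarith)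
    have hε' : 0 < F p * (1 - Real.exp (-ε)) := mul_pos hFp (by linarith)
    obtain ⟨δ, hδ0, hδ⟩ := hrc p hp _ hε'
    refine ⟨δ, hδ0, ?_⟩
    intro q hpq hqδ
    have hq0 : 0 ≤ q := hp.trans hpq
    have h2 : F (p+δ) ≤ F q := hanti q (p+δ) hq0 hqδ
    have h1 : F p * Real.exp (-ε) ≤ F q := by nlinarith
    have h3 := Real.log_le_log (by positivity) h1
    rw [Real.log_mul (ne_of_gt hFp) (ne_of_gt (Real.exp_pos _)), Real.log_exp] at h3
    linarith

private lemma rr2_extract {F G : ℝ → ℝ} {θ : ℝ} {H : ℝ → ℝ → ℝ}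
    (hH1 : ∀ x y : ℝ, 0 ≤ y → y ≤ x → H x y = Real.exp (-θ*y) * F (x-y))
    (hH2 : ∀ x y : ℝ, 0 ≤ x → x ≤ y → H x y = Real.exp (-θ*x) * G (y-x))
    (hF0 : F 0 = 1) (hG0 : G 0 = 1)
    (hRR : RR2 H (Ioi 0) (Ioi 0)) :
    (∀ a b c : ℝ, 0 ≤ a → a < b → a < c → F b * F c ≤ F a * F (b+c-a)) ∧
    (∀ a b c : ℝ, 0 ≤ a → a < b → a < c → G b * G c ≤ G a * G (b+c-a)) ∧
    (∀ x : ℝ, 0 < x → Real.exp (-θ*x) ≤ F x * G x) := by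
  refine ⟨?_, ?_, ?_⟩
  · intro a b c ha hab hac
    have hb0 : 0 ≤ b := ha.trans hab.le
    have hc0 : 0 ≤ c := ha.trans hac.le
    have h := hRR (1+b) (by simp only [mem_Ioi]; linarith)
      (1+(b+c-a)) (by simp only [mem_Ioi]; linarith)
      1 (by simp only [mem_Ioi]; norm_num)
      (1+(b-a)) (by simp only [mem_Ioi]; linarith)
      (by linarith) (by linarith)
    rw [hH1 (1+b) 1 (by norm_num) (by linarith),
        hH1 (1+(b+c-a)) (1+(b-a)) (by linarith) (by linarith),
        hH1 (1+b) (1+(b-a)) (by linarith) (by linarith),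
        hH1 (1+(b+c-a)) 1 (by norm_num) (by linarith),
        show (1:ℝ)+b-1 = b from by ring,
        show (1:ℝ)+(b+c-a)-(1+(b-a)) = c from by ring,
        show (1:ℝ)+b-(1+(b-a)) = a from by ring,
        show (1:ℝ)+(b+c-a)-1 = b+c-a from by ring] at h
    have hE : (0:ℝ) < Real.exp (-θ*1) * Real.exp (-θ*(1+(b-a))) := by positivity
    have h' : (Real.exp (-θ*1) * Real.exp (-θ*(1+(b-a)))) * (F b * F c)
        ≤ (Real.exp (-θ*1) * Real.exp (-θ*(1+(b-a)))) * (F a * F (b+c-a)) := by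
      calc (Real.exp (-θ*1) * Real.exp (-θ*(1+(b-a)))) * (F b * F c)
          = Real.exp (-θ*1) * F b * (Real.exp (-θ*(1+(b-a))) * F c) := by ring
        _ ≤ Real.exp (-θ*(1+(b-a))) * F a * (Real.exp (-θ*1) * F (b+c-a)) := h
        _ = (Real.exp (-θ*1) * Real.exp (-θ*(1+(b-a)))) * (F a * F (b+c-a)) := by ring
    exact le_of_mul_le_mul_left h' hE
  · intro a b c ha hab hac
    have hb0 : 0 ≤ b := ha.trans hab.le
    have hc0 : 0 ≤ c := ha.trans hac.le
    have h := hRR 1 (by simp only [mem_Ioi]; norm_num)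
      (1+(b-a)) (by simp only [mem_Ioi]; linarith)
      (1+b) (by simp only [mem_Ioi]; linarith)
      (1+(b+c-a)) (by simp only [mem_Ioi]; linarith)
      (by linarith) (by linarith)
    rw [hH2 1 (1+b) (by norm_num) (by linarith),
        hH2 (1+(b-a)) (1+(b+c-a)) (by linarith) (by linarith),
        hH2 1 (1+(b+c-a)) (by norm_num) (by linarith),
        hH2 (1+(b-a)) (1+b) (by linarith) (by linarith),
        show (1:ℝ)+b-1 = b from by ring,
        show (1:ℝ)+(b+c-a)-(1+(b-a)) = c from by ring,
        show (1:ℝ)+b-(1+(b-a)) = a from by ring,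
        show (1:ℝ)+(b+c-a)-1 = b+c-a from by ring] at h
    have hE : (0:ℝ) < Real.exp (-θ*1) * Real.exp (-θ*(1+(b-a))) := by positivity
    have h' : (Real.exp (-θ*1) * Real.exp (-θ*(1+(b-a)))) * (G b * G c)
        ≤ (Real.exp (-θ*1) * Real.exp (-θ*(1+(b-a)))) * (G a * G (b+c-a)) := by
      calc (Real.exp (-θ*1) * Real.exp (-θ*(1+(b-a)))) * (G b * G c)
          = Real.exp (-θ*1) * G b * (Real.exp (-θ*(1+(b-a))) * G c) := by ring
        _ ≤ Real.exp (-θ*1) * G (b+c-a) * (Real.exp (-θ*(1+(b-a))) * G a) := h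
        _ = (Real.exp (-θ*1) * Real.exp (-θ*(1+(b-a)))) * (G a * G (b+c-a)) := by ring
    exact le_of_mul_le_mul_left h' hE
  · intro x hx
    have h := hRR 1 (by simp only [mem_Ioi]; norm_num)
      (1+x) (by simp only [mem_Ioi]; linarith)
      1 (by simp only [mem_Ioi]; norm_num)
      (1+x) (by simp only [mem_Ioi]; linarith)
      (by linarith) (by linarith)
    rw [hH1 1 1 (by norm_num) (by norm_num),
        hH1 (1+x) (1+x) (by linarith) (by linarith),
        hH2 1 (1+x) (by norm_num) (by linarith),
        hH1 (1+x) 1 (by norm_num) (by linarith),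
        show (1:ℝ)-1 = 0 from by ring,
        show (1:ℝ)+x-(1+x) = 0 from by ring,
        show (1:ℝ)+x-1 = x from by ring, hF0] at h
    have hexp : Real.exp (-θ*(1+x)) = Real.exp (-θ*1) * Real.exp (-θ*x) := by
      rw [← Real.exp_add]; congr 1; ring
    have hE : (0:ℝ) < Real.exp (-θ*1) * Real.exp (-θ*1) := by positivity
    have h' : (Real.exp (-θ*1) * Real.exp (-θ*1)) * Real.exp (-θ*x)
        ≤ (Real.exp (-θ*1) * Real.exp (-θ*1)) * (F x * G x) := by
      calc (Real.exp (-θ*1) * Real.exp (-θ*1)) * Real.exp (-θ*x)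
          = Real.exp (-θ*1) * 1 * (Real.exp (-θ*(1+x)) * 1) := by rw [hexp]; ring
        _ ≤ Real.exp (-θ*1) * G x * (Real.exp (-θ*1) * F x) := h
        _ = (Real.exp (-θ*1) * Real.exp (-θ*1)) * (F x * G x) := by ring
    exact le_of_mul_le_mul_left h' hE

private lemma rr2_of_conditions (F G : ℝ → ℝ) (θ : ℝ) (H : ℝ → ℝ → ℝ)
    (hH1 : ∀ x y : ℝ, 0 ≤ y → y ≤ x → H x y = Real.exp (-θ*y) * F (x-y))
    (hH2 : ∀ x y : ℝ, 0 ≤ x → x ≤ y → H x y = Real.exp (-θ*x) * G (y-x))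
    (hF0 : F 0 = 1) (hG0 : G 0 = 1)
    (hFpos : ∀ x, 0 ≤ x → 0 < F x) (hGpos : ∀ x, 0 ≤ x → 0 < G x)
    (hFpair : ∀ a b c : ℝ, 0 ≤ a → a ≤ b → a ≤ c → F b * F c ≤ F a * F (b+c-a))
    (hGpair : ∀ a b c : ℝ, 0 ≤ a → a ≤ b → a ≤ c → G b * G c ≤ G a * G (b+c-a))
    (hprod : ∀ x, 0 ≤ x → Real.exp (-θ*x) ≤ F x * G x) :
    RR2 H (Ioi 0) (Ioi 0) := by
  have hFsuper : ∀ u v : ℝ, 0 ≤ u → 0 ≤ v → F u * F v ≤ F (u+v) := by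
    intro u v hu hv
    have h := hFpair 0 u v le_rfl hu hv
    rw [hF0, one_mul, show u + v - 0 = u + v from by ring] at h
    exact h
  have hGsuper : ∀ u v : ℝ, 0 ≤ u → 0 ≤ v → G u * G v ≤ G (u+v) := by
    intro u v hu hv
    have h := hGpair 0 u v le_rfl hu hv
    rw [hG0, one_mul, show u + v - 0 = u + v from by ring] at h
    exact h
  intro x₁ hx₁ x₂ hx₂ y₁ hy₁ y₂ hy₂ hx hy
  simp only [mem_Ioi] at hx₁ hx₂ hy₁ hy₂
  have eadd : ∀ u v : ℝ, Real.exp (-θ*u) * Real.exp (-θ*(v-u)) = Real.exp (-θ*v) := by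
    intro u v; rw [← Real.exp_add]; congr 1; ring
  rcases le_total x₂ y₁ with h1 | h1
  · -- x₁ < x₂ ≤ y₁ < y₂ : pure G region
    rw [hH2 x₁ y₁ hx₁.le (by linarith), hH2 x₂ y₂ hx₂.le (by linarith),
        hH2 x₁ y₂ hx₁.le (by linarith), hH2 x₂ y₁ hx₂.le h1]
    have hp := hGpair (y₁-x₂) (y₁-x₁) (y₂-x₂) (by linarith) (by linarith) (by linarith)
    rw [show y₁-x₁ + (y₂-x₂) - (y₁-x₂) = y₂ - x₁ from by ring] at hp
    calc Real.exp (-θ*x₁) * G (y₁-x₁) * (Real.exp (-θ*x₂) * G (y₂-x₂))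
        = (Real.exp (-θ*x₁) * Real.exp (-θ*x₂)) * (G (y₁-x₁) * G (y₂-x₂)) := by ring
      _ ≤ (Real.exp (-θ*x₁) * Real.exp (-θ*x₂)) * (G (y₁-x₂) * G (y₂-x₁)) :=
          mul_le_mul_of_nonneg_left hp (by positivity)
      _ = Real.exp (-θ*x₁) * G (y₂-x₁) * (Real.exp (-θ*x₂) * G (y₁-x₂)) := by ring
  rcases le_total y₂ x₁ with h2 | h2
  · -- y₁ < y₂ ≤ x₁ < x₂ : pure F region
    rw [hH1 x₁ y₁ hy₁.le (by linarith), hH1 x₂ y₂ hy₂.le (by linarith),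
        hH1 x₁ y₂ hy₂.le h2, hH1 x₂ y₁ hy₁.le (by linarith)]
    have hp := hFpair (x₁-y₂) (x₁-y₁) (x₂-y₂) (by linarith) (by linarith) (by linarith)
    rw [show x₁-y₁ + (x₂-y₂) - (x₁-y₂) = x₂ - y₁ from by ring] at hp
    calc Real.exp (-θ*y₁) * F (x₁-y₁) * (Real.exp (-θ*y₂) * F (x₂-y₂))
        = (Real.exp (-θ*y₁) * Real.exp (-θ*y₂)) * (F (x₁-y₁) * F (x₂-y₂)) := by ring
      _ ≤ (Real.exp (-θ*y₁) * Real.exp (-θ*y₂)) * (F (x₁-y₂) * F (x₂-y₁)) :=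
          mul_le_mul_of_nonneg_left hp (by positivity)
      _ = Real.exp (-θ*y₂) * F (x₁-y₂) * (Real.exp (-θ*y₁) * F (x₂-y₁)) := by ring
  rcases le_total x₁ y₁ with h3 | h3 <;> rcases le_total x₂ y₂ with h4 | h4
  · -- x₁ ≤ y₁ ≤ x₂ ≤ y₂
    rw [hH2 x₁ y₁ hx₁.le h3, hH2 x₂ y₂ hx₂.le h4, hH2 x₁ y₂ hx₁.le h2, hH1 x₂ y₁ hy₁.le h1]
    have hq := hprod (x₂-y₁) (by linarith)
    have hg1 : (0:ℝ) ≤ G (y₁-x₁) := (hGpos _ (by linarith)).le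
    have hg2 : (0:ℝ) ≤ G (y₂-x₂) := (hGpos _ (by linarith)).le
    have hg3 : (0:ℝ) ≤ G (x₂-y₁) := (hGpos _ (by linarith)).le
    have hf1 : (0:ℝ) ≤ F (x₂-y₁) := (hFpos _ (by linarith)).le
    have hs1 : G (y₁-x₁) * G (x₂-y₁) ≤ G (x₂-x₁) := by
      have := hGsuper (y₁-x₁) (x₂-y₁) (by linarith) (by linarith)
      rwa [show y₁-x₁ + (x₂-y₁) = x₂-x₁ from by ring] at this
    have hs2 : G (x₂-x₁) * G (y₂-x₂) ≤ G (y₂-x₁) := by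
      have := hGsuper (x₂-x₁) (y₂-x₂) (by linarith) (by linarith)
      rwa [show x₂-x₁ + (y₂-x₂) = y₂-x₁ from by ring] at this
    calc Real.exp (-θ*x₁) * G (y₁-x₁) * (Real.exp (-θ*x₂) * G (y₂-x₂))
        = (Real.exp (-θ*x₁) * Real.exp (-θ*y₁))
            * (Real.exp (-θ*(x₂-y₁)) * (G (y₁-x₁) * G (y₂-x₂))) := by
          rw [← eadd y₁ x₂]; ring
      _ ≤ (Real.exp (-θ*x₁) * Real.exp (-θ*y₁))
            * ((F (x₂-y₁) * G (x₂-y₁)) * (G (y₁-x₁) * G (y₂-x₂))) := by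
          refine mul_le_mul_of_nonneg_left ?_ (by positivity)
          exact mul_le_mul_of_nonneg_right hq (mul_nonneg hg1 hg2)
      _ = (Real.exp (-θ*x₁) * Real.exp (-θ*y₁) * F (x₂-y₁))
            * ((G (y₁-x₁) * G (x₂-y₁)) * G (y₂-x₂)) := by ring
      _ ≤ (Real.exp (-θ*x₁) * Real.exp (-θ*y₁) * F (x₂-y₁)) * (G (x₂-x₁) * G (y₂-x₂)) := by
          refine mul_le_mul_of_nonneg_left ?_ (by positivity)
          exact mul_le_mul_of_nonneg_right hs1 hg2
      _ ≤ (Real.exp (-θ*x₁) * Real.exp (-θ*y₁) * F (x₂-y₁)) * G (y₂-x₁) := by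
          refine mul_le_mul_of_nonneg_left hs2 (by positivity)
      _ = Real.exp (-θ*x₁) * G (y₂-x₁) * (Real.exp (-θ*y₁) * F (x₂-y₁)) := by ring
  · -- x₁ ≤ y₁, y₂ ≤ x₂
    rw [hH2 x₁ y₁ hx₁.le h3, hH1 x₂ y₂ hy₂.le h4, hH2 x₁ y₂ hx₁.le h2, hH1 x₂ y₁ hy₁.le h1]
    have hq := hprod (y₂-y₁) (by linarith)
    have hg1 : (0:ℝ) ≤ G (y₁-x₁) := (hGpos _ (by linarith)).le
    have hf2 : (0:ℝ) ≤ F (x₂-y₂) := (hFpos _ (by linarith)).le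
    have hs1 : G (y₁-x₁) * G (y₂-y₁) ≤ G (y₂-x₁) := by
      have := hGsuper (y₁-x₁) (y₂-y₁) (by linarith) (by linarith)
      rwa [show y₁-x₁ + (y₂-y₁) = y₂-x₁ from by ring] at this
    have hs2 : F (y₂-y₁) * F (x₂-y₂) ≤ F (x₂-y₁) := by
      have := hFsuper (y₂-y₁) (x₂-y₂) (by linarith) (by linarith)
      rwa [show y₂-y₁ + (x₂-y₂) = x₂-y₁ from by ring] at this
    have hg4 : (0:ℝ) ≤ G (y₂-y₁) := (hGpos _ (by linarith)).le
    have hf4 : (0:ℝ) ≤ F (y₂-y₁) := (hFpos _ (by linarith)).le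
    have hg5 : (0:ℝ) ≤ G (y₂-x₁) := (hGpos _ (by linarith)).le
    have hf5 : (0:ℝ) ≤ F (x₂-y₁) := (hFpos _ (by linarith)).le
    calc Real.exp (-θ*x₁) * G (y₁-x₁) * (Real.exp (-θ*y₂) * F (x₂-y₂))
        = (Real.exp (-θ*x₁) * Real.exp (-θ*y₁))
            * (Real.exp (-θ*(y₂-y₁)) * (G (y₁-x₁) * F (x₂-y₂))) := by
          rw [← eadd y₁ y₂]; ring
      _ ≤ (Real.exp (-θ*x₁) * Real.exp (-θ*y₁))
            * ((F (y₂-y₁) * G (y₂-y₁)) * (G (y₁-x₁) * F (x₂-y₂))) := by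
          refine mul_le_mul_of_nonneg_left ?_ (by positivity)
          exact mul_le_mul_of_nonneg_right hq (mul_nonneg hg1 hf2)
      _ = (Real.exp (-θ*x₁) * Real.exp (-θ*y₁))
            * ((G (y₁-x₁) * G (y₂-y₁)) * (F (y₂-y₁) * F (x₂-y₂))) := by ring
      _ ≤ (Real.exp (-θ*x₁) * Real.exp (-θ*y₁)) * (G (y₂-x₁) * F (x₂-y₁)) := by
          refine mul_le_mul_of_nonneg_left ?_ (by positivity)
          exact mul_le_mul (by exact hs1) hs2 (mul_nonneg hf4 hf2) hg5
      _ = Real.exp (-θ*x₁) * G (y₂-x₁) * (Real.exp (-θ*y₁) * F (x₂-y₁)) := by ring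
  · -- y₁ ≤ x₁, x₂ ≤ y₂
    rw [hH1 x₁ y₁ hy₁.le h3, hH2 x₂ y₂ hx₂.le h4, hH2 x₁ y₂ hx₁.le h2, hH1 x₂ y₁ hy₁.le h1]
    have hq := hprod (x₂-x₁) (by linarith)
    have hf1 : (0:ℝ) ≤ F (x₁-y₁) := (hFpos _ (by linarith)).le
    have hg2 : (0:ℝ) ≤ G (y₂-x₂) := (hGpos _ (by linarith)).le
    have hf4 : (0:ℝ) ≤ F (x₂-x₁) := (hFpos _ (by linarith)).le
    have hg4 : (0:ℝ) ≤ G (x₂-x₁) := (hGpos _ (by linarith)).le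
    have hf5 : (0:ℝ) ≤ F (x₂-y₁) := (hFpos _ (by linarith)).le
    have hg5 : (0:ℝ) ≤ G (y₂-x₁) := (hGpos _ (by linarith)).le
    have hs1 : F (x₁-y₁) * F (x₂-x₁) ≤ F (x₂-y₁) := by
      have := hFsuper (x₁-y₁) (x₂-x₁) (by linarith) (by linarith)
      rwa [show x₁-y₁ + (x₂-x₁) = x₂-y₁ from by ring] at this
    have hs2 : G (x₂-x₁) * G (y₂-x₂) ≤ G (y₂-x₁) := by
      have := hGsuper (x₂-x₁) (y₂-x₂) (by linarith) (by linarith)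
      rwa [show x₂-x₁ + (y₂-x₂) = y₂-x₁ from by ring] at this
    calc Real.exp (-θ*y₁) * F (x₁-y₁) * (Real.exp (-θ*x₂) * G (y₂-x₂))
        = (Real.exp (-θ*y₁) * Real.exp (-θ*x₁))
            * (Real.exp (-θ*(x₂-x₁)) * (F (x₁-y₁) * G (y₂-x₂))) := by
          rw [← eadd x₁ x₂]; ring
      _ ≤ (Real.exp (-θ*y₁) * Real.exp (-θ*x₁))
            * ((F (x₂-x₁) * G (x₂-x₁)) * (F (x₁-y₁) * G (y₂-x₂))) := by
          refine mul_le_mul_of_nonneg_left ?_ (by positivity)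
          exact mul_le_mul_of_nonneg_right hq (mul_nonneg hf1 hg2)
      _ = (Real.exp (-θ*y₁) * Real.exp (-θ*x₁))
            * ((F (x₁-y₁) * F (x₂-x₁)) * (G (x₂-x₁) * G (y₂-x₂))) := by ring
      _ ≤ (Real.exp (-θ*y₁) * Real.exp (-θ*x₁)) * (F (x₂-y₁) * G (y₂-x₁)) := by
          refine mul_le_mul_of_nonneg_left ?_ (by positivity)
          exact mul_le_mul hs1 hs2 (mul_nonneg hg4 hg2) hf5
      _ = Real.exp (-θ*x₁) * G (y₂-x₁) * (Real.exp (-θ*y₁) * F (x₂-y₁)) := by ring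
  · -- y₁ ≤ x₁, y₂ ≤ x₂
    rw [hH1 x₁ y₁ hy₁.le h3, hH1 x₂ y₂ hy₂.le h4, hH2 x₁ y₂ hx₁.le h2, hH1 x₂ y₁ hy₁.le h1]
    have hq := hprod (y₂-x₁) (by linarith)
    have hf1 : (0:ℝ) ≤ F (x₁-y₁) := (hFpos _ (by linarith)).le
    have hf2 : (0:ℝ) ≤ F (x₂-y₂) := (hFpos _ (by linarith)).le
    have hf4 : (0:ℝ) ≤ F (y₂-x₁) := (hFpos _ (by linarith)).le
    have hg4 : (0:ℝ) ≤ G (y₂-x₁) := (hGpos _ (by linarith)).le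
    have hf6 : (0:ℝ) ≤ F (y₂-y₁) := (hFpos _ (by linarith)).le
    have hs1 : F (x₁-y₁) * F (y₂-x₁) ≤ F (y₂-y₁) := by
      have := hFsuper (x₁-y₁) (y₂-x₁) (by linarith) (by linarith)
      rwa [show x₁-y₁ + (y₂-x₁) = y₂-y₁ from by ring] at this
    have hs2 : F (y₂-y₁) * F (x₂-y₂) ≤ F (x₂-y₁) := by
      have := hFsuper (y₂-y₁) (x₂-y₂) (by linarith) (by linarith)
      rwa [show y₂-y₁ + (x₂-y₂) = x₂-y₁ from by ring] at this
    calc Real.exp (-θ*y₁) * F (x₁-y₁) * (Real.exp (-θ*y₂) * F (x₂-y₂))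
        = (Real.exp (-θ*y₁) * Real.exp (-θ*x₁))
            * (Real.exp (-θ*(y₂-x₁)) * (F (x₁-y₁) * F (x₂-y₂))) := by
          rw [← eadd x₁ y₂]; ring
      _ ≤ (Real.exp (-θ*y₁) * Real.exp (-θ*x₁))
            * ((F (y₂-x₁) * G (y₂-x₁)) * (F (x₁-y₁) * F (x₂-y₂))) := by
          refine mul_le_mul_of_nonneg_left ?_ (by positivity)
          exact mul_le_mul_of_nonneg_right hq (mul_nonneg hf1 hf2)
      _ = (Real.exp (-θ*y₁) * Real.exp (-θ*x₁) * G (y₂-x₁))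
            * ((F (x₁-y₁) * F (y₂-x₁)) * F (x₂-y₂)) := by ring
      _ ≤ (Real.exp (-θ*y₁) * Real.exp (-θ*x₁) * G (y₂-x₁)) * (F (y₂-y₁) * F (x₂-y₂)) := by
          refine mul_le_mul_of_nonneg_left ?_ (by positivity)
          exact mul_le_mul_of_nonneg_right hs1 hf2
      _ ≤ (Real.exp (-θ*y₁) * Real.exp (-θ*x₁) * G (y₂-x₁)) * F (x₂-y₁) := by
          refine mul_le_mul_of_nonneg_left hs2 (by positivity)
      _ = Real.exp (-θ*x₁) * G (y₂-x₁) * (Real.exp (-θ*y₁) * F (x₂-y₁)) := by ring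

theorem blm_survival_rr2_iff {Ω : Type*} [MeasurableSpace Ω] (μ : Measure Ω)
    [IsProbabilityMeasure μ] (X Y : Ω → ℝ) (hX : Measurable X) (hY : Measurable Y)
    (θ : ℝ) (hBLM : IsBLM μ X Y θ)
    (hFpos : ∀ x : ℝ, 0 ≤ x → 0 < survival μ X x)
    (hGpos : ∀ x : ℝ, 0 ≤ x → 0 < survival μ Y x) :
    RR2 (jointSurvival μ X Y) (Ioi 0) (Ioi 0) ↔
      (ConcaveOn ℝ (Ici 0) (fun x => -Real.log (survival μ X x)) ∧
        ConcaveOn ℝ (Ici 0) (fun x => -Real.log (survival μ Y x)) ∧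
        ∀ x : ℝ, 0 ≤ x → Real.exp (-θ * x) ≤ survival μ X x * survival μ Y x) := by
  obtain ⟨hθ, hX1, hY1, hH1, hH2⟩ := hBLM
  have hF0 : survival μ X 0 = 1 := by unfold survival; rw [hX1]; simp
  have hG0 : survival μ Y 0 = 1 := by unfold survival; rw [hY1]; simp
  have hFanti : ∀ u v : ℝ, 0 ≤ u → u ≤ v → survival μ X v ≤ survival μ X u :=
    fun u v _ h => survival_mono μ X h
  have hGanti : ∀ u v : ℝ, 0 ≤ u → u ≤ v → survival μ Y v ≤ survival μ Y u :=
    fun u v _ h => survival_mono μ Y h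
  have hFrc : ∀ p : ℝ, 0 ≤ p → ∀ ε > (0:ℝ), ∃ δ > (0:ℝ),
      survival μ X p ≤ survival μ X (p + δ) + ε := fun p _ => survival_rc μ X p
  have hGrc : ∀ p : ℝ, 0 ≤ p → ∀ ε > (0:ℝ), ∃ δ > (0:ℝ),
      survival μ Y p ≤ survival μ Y (p + δ) + ε := fun p _ => survival_rc μ Y p
  constructor
  · intro hRR
    obtain ⟨hFp, hGp, hpr⟩ := rr2_extract hH1 hH2 hF0 hG0 hRR
    have hFconv := convex_log_of_pair (survival μ X) hFpos hFanti hFrc hFp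
    have hGconv := convex_log_of_pair (survival μ Y) hGpos hGanti hGrc hGp
    refine ⟨?_, ?_, ?_⟩
    · exact hFconv.neg
    · exact hGconv.neg
    · intro x hx
      rcases eq_or_lt_of_le hx with rfl | hx'
      · rw [hF0, hG0]; simp
      · exact hpr x hx'
  · rintro ⟨hFconc, hGconc, hprod⟩
    have hFconv : ConvexOn ℝ (Ici 0) (fun x => Real.log (survival μ X x)) := by
      have h := hFconc.neg
      have e : (fun x => Real.log (survival μ X x))
          = -(fun x => -Real.log (survival μ X x)) := by funext x; simp
      rw [e]; exact h
    have hGconv : ConvexOn ℝ (Ici 0) (fun x => Real.log (survival μ Y x)) := by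
      have h := hGconc.neg
      have e : (fun x => Real.log (survival μ Y x))
          = -(fun x => -Real.log (survival μ Y x)) := by funext x; simp
      rw [e]; exact h
    exact rr2_of_conditions (survival μ X) (survival μ Y) θ (jointSurvival μ X Y)
      hH1 hH2 hF0 hG0 hFpos hGpos
      (pair_of_convex (survival μ X) hFpos hFconv)
      (pair_of_convex (survival μ Y) hGpos hGconv)
      hprod
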